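/- arXiv:1710.05022 — 5 statements merged into one kernel-verified Lean document; each statement's English description precedes it below -/
import Mathlib

section
/- Let b be a g-invariant bilinear form on a g-module V, and W a two-dimensional subspace of V with ρ_v W ⊆ W for a given v ∈ g. Then for any linearly independent f_s, f_t ∈ W, Tr(ρ_v|_W) · b(f_s, f_t) · (f_t ∧ f_s) = b(f_s, f_s) · ((ρ_v f_t) ∧ f_t) + b(f_t, f_t) · (f_s ∧ (ρ_v f_s)) in Λ²V. -/
attribute [local instance 100] LieRing.ofAssociativeRing

/-- Let `b` be a `g`-invariant bilinear form on a `g`-module `V`, and `W` a two-dimensional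
subspace of `V` with `ρ_v W ⊆ W` for a given `v ∈ g`.  Then, for linearly independent
`f_s, f_t ∈ W`,
`Tr(ρ_v|_W) · b(f_s,f_t) · (f_t ∧ f_s)
  = b(f_s,f_s) · ((ρ_v f_t) ∧ f_t) + b(f_t,f_t) · (f_s ∧ (ρ_v f_s))` in `Λ²V`. -/
theorem invariant_form_two_dim_invariant_subspace
    (L : Type*) [LieRing L] [LieAlgebra ℝ L]
    (V : Type*) [AddCommGroup V] [Module ℝ V] [FiniteDimensional ℝ V]
    (ρ : L →ₗ⁅ℝ⁆ Module.End ℝ V)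
    (b : LinearMap.BilinForm ℝ V)
    (hinv : ∀ (v : L) (x y : V), b (ρ v x) y + b x (ρ v y) = 0)
    (W : Submodule ℝ V) (hW2 : Module.finrank ℝ W = 2)
    (v : L) (hWv : ∀ x ∈ W, ρ v x ∈ W)
    (fs ft : V) (hfs : fs ∈ W) (hft : ft ∈ W)
    (hli : LinearIndependent ℝ ![fs, ft])
    (f : W →ₗ[ℝ] W) (hf : ∀ y : W, (f y : V) = ρ v (y : V)) :
    (LinearMap.trace ℝ W f) • (b fs ft) • (ExteriorAlgebra.ιMulti ℝ 2 ![ft, fs]) =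
      (b fs fs) • (ExteriorAlgebra.ιMulti ℝ 2 ![ρ v ft, ft]) +
      (b ft ft) • (ExteriorAlgebra.ιMulti ℝ 2 ![fs, ρ v fs]) := by
  classical
  -- elements of W
  set fs' : W := ⟨fs, hfs⟩
  set ft' : W := ⟨ft, hft⟩
  have hli' : LinearIndependent ℝ ![fs', ft'] := by
    apply LinearIndependent.of_comp W.subtype
    have : (W.subtype ∘ ![fs', ft']) = ![fs, ft] := by
      ext i
      fin_cases i <;> rfl
    rwa [this]
  have hcard : Fintype.card (Fin 2) = Module.finrank ℝ W := by simp [hW2]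
  let B := basisOfLinearIndependentOfCardEqFinrank hli' hcard
  have hB : ∀ i, B i = ![fs', ft'] i := fun i => by
    simp [B, coe_basisOfLinearIndependentOfCardEqFinrank]
  set a : ℝ := B.repr (f fs') 0
  set c : ℝ := B.repr (f fs') 1
  set d : ℝ := B.repr (f ft') 0
  set e : ℝ := B.repr (f ft') 1
  have hfsV : ρ v fs = a • fs + c • ft := by
    have h := B.sum_repr (f fs')
    rw [Fin.sum_univ_two, hB 0, hB 1] at h
    have := congrArg (W.subtype) h
    simpa [hf, fs', ft'] using this.symm
  have hftV : ρ v ft = d • fs + e • ft := by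
    have h := B.sum_repr (f ft')
    rw [Fin.sum_univ_two, hB 0, hB 1] at h
    have := congrArg (W.subtype) h
    simpa [hf, fs', ft'] using this.symm
  have htr : LinearMap.trace ℝ W f = a + e := by
    rw [LinearMap.trace_eq_matrix_trace ℝ B f, Matrix.trace]
    simp [Matrix.diag, Fin.sum_univ_two, LinearMap.toMatrix_apply, hB, a, e]
  -- invariance relation
  have hrel : a * b fs ft + c * b ft ft + (d * b fs fs + e * b fs ft) = 0 := by
    have h := hinv v fs ft
    rw [hfsV, hftV] at h
    simpa [map_add, map_smul, smul_eq_mul] using h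
  -- exterior algebra computation
  have hmulti : ∀ x y : V, ExteriorAlgebra.ιMulti ℝ 2 ![x, y]
      = ExteriorAlgebra.ι ℝ x * ExteriorAlgebra.ι ℝ y := by
    intro x y
    rw [ExteriorAlgebra.ιMulti_apply]
    simp [List.ofFn_succ]
  set u := ExteriorAlgebra.ι ℝ fs * ExteriorAlgebra.ι ℝ ft with hu
  have hanti : ExteriorAlgebra.ι ℝ ft * ExteriorAlgebra.ι ℝ fs = -u := by
    rw [hu]
    exact eq_neg_of_add_eq_zero_right (ExteriorAlgebra.ι_add_mul_swap (R := ℝ) fs ft)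
  have h1 : ExteriorAlgebra.ιMulti ℝ 2 ![ft, fs] = -u := by
    rw [hmulti, hanti]
  have h2 : ExteriorAlgebra.ιMulti ℝ 2 ![ρ v ft, ft] = d • u := by
    rw [hmulti, hftV, map_add, map_smul, map_smul, add_mul, smul_mul_assoc,
      smul_mul_assoc, ExteriorAlgebra.ι_sq_zero, smul_zero, add_zero, hu]
  have h3 : ExteriorAlgebra.ιMulti ℝ 2 ![fs, ρ v fs] = c • u := by
    rw [hmulti, hfsV, map_add, map_smul, map_smul, mul_add, mul_smul_comm,
      mul_smul_comm, ExteriorAlgebra.ι_sq_zero, smul_zero, zero_add, hu]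
  rw [h1, h2, h3, htr]
  rw [smul_neg, smul_neg, smul_smul, smul_smul, smul_smul, ← add_smul, ← neg_smul]
  congr 1
  linarith [hrel]
end

section
/- If g admits a root ℤᵏ-gradation, then every g-invariant m-vector lies in the zero-degree homogeneous component: (Λᵐg)^g ⊆ (Λᵐg)^(0). -/
open ExteriorAlgebra

/-- The homogeneous component of degree `α` of the `m`-th exterior power induced by a
`ℤᵏ`-gradation `χ` of the underlying module (additive degrees). -/
def gradedPieceAdd {L : Type*} [AddCommGroup L] [Module ℝ L] {k : ℕ}
    (χ : (Fin k → ℤ) → Submodule ℝ L) (m : ℕ) (α : Fin k → ℤ) :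
    Submodule ℝ (ExteriorAlgebra ℝ L) :=
  Submodule.span ℝ {w | ∃ d : Fin m → (Fin k → ℤ), ∃ x : Fin m → L,
    (∀ i, x i ∈ χ (d i)) ∧ (∑ i, d i) = α ∧ w = ιMulti ℝ m x}

/-- Avoidance lemma: a finite set of nonzero functionals has a common non-vanishing point. -/
private lemma avoid_kernels {V : Type*} [AddCommGroup V] [Module ℝ V]
    (Φ : Finset (Module.Dual ℝ V)) (h : ∀ φ ∈ Φ, φ ≠ 0) :
    ∃ e : V, ∀ φ ∈ Φ, φ e ≠ 0 := by
  classical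
  have hs : ⊤ ∉ Φ.image (fun φ => LinearMap.ker φ) := by
    simp only [Finset.mem_image]
    rintro ⟨φ, hφ, hker⟩
    exact h φ hφ (LinearMap.ker_eq_top.mp hker)
  have hne := Subspace.biUnion_ne_univ_of_top_notMem (s := Φ.image (fun φ => LinearMap.ker φ)) hs
  rw [Set.ne_univ_iff_exists_notMem] at hne
  obtain ⟨e, he⟩ := hne
  refine ⟨e, fun φ hφ hzero => he ?_⟩
  simp only [Set.mem_iUnion, SetLike.mem_coe]
  exact ⟨_, Finset.mem_image_of_mem _ hφ, hzero⟩

private lemma eigen_sum_zero {ι M : Type*} [DecidableEq ι] [AddCommGroup M] [Module ℝ M]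
    (A : Module.End ℝ M) :
    ∀ (s : Finset ι) (c : ι → ℝ) (u : ι → M),
      Set.InjOn c s → (∀ i ∈ s, A (u i) = c i • u i) → ∑ i ∈ s, u i = 0 →
      ∀ i ∈ s, u i = 0 := by
  intro s
  induction s using Finset.induction_on with
  | empty => intro c u _ _ _ i hi; simp at hi
  | @insert j t hj ih =>
    intro c u hinj heig hsum i hi
    have hjt : (j : ι) ∈ insert j t := Finset.mem_insert_self j t
    have hzero : ∀ i ∈ t, u i = 0 := by
      have h1 : ∑ i ∈ insert j t, (A (u i) - c j • u i) = 0 := by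
        rw [Finset.sum_sub_distrib, ← map_sum, hsum, ← Finset.smul_sum, hsum]
        simp
      have h2 : ∑ i ∈ t, ((c i - c j) • u i) = 0 := by
        rw [Finset.sum_insert hj] at h1
        rw [heig j hjt] at h1
        simp only [sub_self, zero_add] at h1
        rw [← h1]
        apply Finset.sum_congr rfl
        intro i hit
        rw [heig i (Finset.mem_insert_of_mem hit), sub_smul]
      have h3 : ∀ i ∈ t, (c i - c j) • u i = 0 := by
        refine ih c (fun i => (c i - c j) • u i)
          (hinj.mono (fun x hx => Finset.mem_insert_of_mem hx)) ?_ h2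
        intro i hit
        rw [map_smul, heig i (Finset.mem_insert_of_mem hit), smul_comm]
      intro i hit
      have hcij : c i - c j ≠ 0 := by
        intro hc
        have : i = j := hinj (Finset.mem_insert_of_mem hit) hjt (by linarith [sub_eq_zero.mp hc])
        exact hj (this ▸ hit)
      have := h3 i hit
      exact (smul_eq_zero.mp this).resolve_left hcij
    rcases Finset.mem_insert.mp hi with rfl | hit
    · rw [Finset.sum_insert hj, Finset.sum_congr rfl (fun i hit => hzero i hit)] at hsum
      simpa using hsum
    · exact hzero i hit


/-- If `g` admits a root `ℤᵏ`-gradation (a `ℤᵏ`-gradation with `dim g^(0) = k` and an injective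
group morphism `T : ℤᵏ → (g^(0))*` such that `[e, x] = T(α)(e) • x` for `e ∈ g^(0)` and
`x ∈ g^(α)`), then every `g`-invariant `m`-vector lies in the zero-degree homogeneous
component: `(Λᵐg)^g ⊆ (Λᵐg)^(0)`.  Here `D` is the Schouten action of `g` on `Λg`. -/
theorem root_gradation_invariants_in_zero_component
    (L : Type*) [LieRing L] [LieAlgebra ℝ L] (k : ℕ)
    (χ : (Fin k → ℤ) → Submodule ℝ L)
    (hind : iSupIndep χ) (hsup : iSup χ = ⊤)
    (hbr : ∀ (α β : Fin k → ℤ), ∀ x ∈ χ α, ∀ y ∈ χ β, ⁅x, y⁆ ∈ χ (α + β))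
    (hdim : Module.finrank ℝ (χ 0) = k)
    (T : (Fin k → ℤ) →+ Module.Dual ℝ (χ 0))
    (hT : Function.Injective T)
    (hroot : ∀ (α : Fin k → ℤ) (e : χ 0), ∀ x ∈ χ α, ⁅(e : L), x⁆ = T α e • x)
    (D : L →ₗ[ℝ] Module.End ℝ (ExteriorAlgebra ℝ L))
    (hD1 : ∀ v x : L, D v (ι ℝ x) = ι ℝ ⁅v, x⁆)
    (hDmul : ∀ (v : L) (a b : ExteriorAlgebra ℝ L), D v (a * b) = D v a * b + a * D v b)
    (m : ℕ) (w : ExteriorAlgebra ℝ L) (hw : w ∈ ⋀[ℝ]^m L)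
    (hinv : ∀ v : L, D v w = 0) :
    w ∈ gradedPieceAdd χ m 0 := by
  classical
  -- D kills 1
  have hD1' : ∀ v : L, D v 1 = 0 := by
    intro v
    have h := hDmul v 1 1
    simp only [mul_one, one_mul] at h
    exact (left_eq_add.mp h)
  -- action of D e on a homogeneous ιMulti
  have hDmulti : ∀ (e : χ 0) (n : ℕ) (d : Fin n → (Fin k → ℤ)) (x : Fin n → L),
      (∀ i, x i ∈ χ (d i)) →
      D (e : L) (ιMulti ℝ n x) = T (∑ i, d i) e • ιMulti ℝ n x := by
    intro e n
    induction n with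
    | zero =>
      intro d x _
      rw [ιMulti_zero_apply, hD1']
      have : (∑ i : Fin 0, d i) = 0 := by simp
      rw [this, map_zero]
      simp
    | succ n ihn =>
      intro d x hx
      rw [ιMulti_succ_apply, hDmul, hD1, hroot (d 0) e (x 0) (hx 0),
        ihn (Matrix.vecTail d) (Matrix.vecTail x) (fun i => hx i.succ), map_smul]
      have hsum : (∑ i : Fin (n + 1), d i) = d 0 + ∑ i : Fin n, Matrix.vecTail d i := by
        rw [Fin.sum_univ_succ]; rfl
      rw [hsum, map_add, LinearMap.add_apply, add_smul, smul_mul_assoc, mul_smul_comm]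
  -- D e acts as the scalar T α e on the graded piece α
  have hpiece : ∀ (e : χ 0) (α : Fin k → ℤ) (u : ExteriorAlgebra ℝ L),
      u ∈ gradedPieceAdd χ m α → D (e : L) u = T α e • u := by
    intro e α u hu
    induction hu using Submodule.span_induction with
    | mem v hv =>
      obtain ⟨d, x, hx, hd, rfl⟩ := hv
      rw [hDmulti e m d x hx, hd]
    | zero => simp
    | add a b _ _ ha hb => rw [map_add, ha, hb, smul_add]
    | smul r a _ ha => rw [map_smul, ha, smul_comm]
  -- the exterior power is contained in the sum of the graded pieces
  have hsub : (⋀[ℝ]^m L : Submodule ℝ (ExteriorAlgebra ℝ L)) ≤ ⨆ α, gradedPieceAdd χ m α := by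
    rw [← ιMulti_span_fixedDegree, Submodule.span_le]
    rintro _ ⟨x, rfl⟩
    have hx : ∀ i : Fin m, ∃ f : (Fin k → ℤ) →₀ L,
        (∀ α, f α ∈ χ α) ∧ (f.sum fun _ y => y) = x i := by
      intro i
      have hxi : x i ∈ iSup χ := by rw [hsup]; exact Submodule.mem_top
      exact (Submodule.mem_iSup_iff_exists_finsupp χ (x i)).mp hxi
    choose f hf hfx using hx
    have hexp : ιMulti ℝ m x = ∑ r ∈ Fintype.piFinset (fun i : Fin m => (f i).support),
        ιMulti ℝ m (fun i => f i (r i)) := by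
      have hX : x = fun i => ∑ α ∈ (f i).support, f i α := by
        funext i
        rw [← hfx i]; rfl
      rw [hX]
      exact (ιMulti ℝ m).toMultilinearMap.map_sum_finset (fun i α => f i α)
        (fun i => (f i).support)
    rw [SetLike.mem_coe, hexp]
    refine Submodule.sum_mem _ (fun r _ => ?_)
    refine Submodule.mem_iSup_of_mem (∑ i, r i) ?_
    exact Submodule.subset_span ⟨r, fun i => f i (r i), fun i => hf i (r i), rfl, rfl⟩
  -- decompose w
  obtain ⟨g, hg, hgsum⟩ := (Submodule.mem_iSup_iff_exists_finsupp _ w).mp (hsub hw)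
  set S : Finset (Fin k → ℤ) := g.support with hS
  -- choose a generic e
  have hT' : ∀ δ : Fin k → ℤ, δ ≠ 0 → T δ ≠ 0 := by
    intro δ hδ hc
    exact hδ (hT (by rw [hc, map_zero]))
  set P : Finset (Fin k → ℤ) := insert 0 S with hP
  set Φ : Finset (Module.Dual ℝ (χ 0)) :=
    ((P ×ˢ P).filter (fun p => p.1 ≠ p.2)).image (fun p => T (p.1 - p.2)) with hΦ
  have hΦne : ∀ φ ∈ Φ, φ ≠ 0 := by
    intro φ hφ
    simp only [hΦ, Finset.mem_image, Finset.mem_filter] at hφ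
    obtain ⟨p, ⟨_, hne⟩, rfl⟩ := hφ
    exact hT' _ (sub_ne_zero.mpr hne)
  obtain ⟨e, he⟩ := avoid_kernels Φ hΦne
  have hsep : ∀ γ ∈ P, ∀ γ' ∈ P, γ ≠ γ' → T γ e ≠ T γ' e := by
    intro γ hγ γ' hγ' hne hc
    have hmem : T (γ - γ') ∈ Φ := by
      simp only [hΦ, Finset.mem_image, Finset.mem_filter, Finset.mem_product]
      exact ⟨(γ, γ'), ⟨⟨hγ, hγ'⟩, hne⟩, rfl⟩
    exact he (T (γ - γ')) hmem (by rw [map_sub, LinearMap.sub_apply, hc, sub_self])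
  -- eigenvalue function
  set c : (Fin k → ℤ) → ℝ := fun γ => T γ e with hc
  have hinj : Set.InjOn c S := by
    intro γ hγ γ' hγ' hcc
    by_contra hne
    exact hsep γ (Finset.mem_insert_of_mem hγ) γ' (Finset.mem_insert_of_mem hγ') hne hcc
  have hDe : D (e : L) w = ∑ γ ∈ S, c γ • g γ := by
    rw [← hgsum, Finsupp.sum, map_sum]
    exact Finset.sum_congr rfl (fun γ hγ => hpiece e γ (g γ) (hg γ))
  have hsum0 : ∑ γ ∈ S, (c γ • g γ) = 0 := by rw [← hDe, hinv]
  have hkill := eigen_sum_zero (D (e : L)) S c (fun γ => c γ • g γ) hinj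
    (fun γ hγ => by rw [map_smul, hpiece e γ (g γ) (hg γ), smul_comm]) hsum0
  -- every element of the support is 0
  have hS0 : ∀ γ ∈ S, γ = 0 := by
    intro γ hγ
    by_contra hne
    have hcγ : c γ ≠ 0 := by
      have := hsep γ (Finset.mem_insert_of_mem hγ) 0 (Finset.mem_insert_self 0 S) hne
      simpa [hc, map_zero] using this
    have : g γ = 0 := by
      have h := hkill γ hγ
      exact (smul_eq_zero.mp h).resolve_left hcγ
    exact (Finsupp.mem_support_iff.mp hγ) this
  -- conclude
  rw [← hgsum, Finsupp.sum]
  refine Submodule.sum_mem _ (fun γ hγ => ?_)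
  rw [hS0 γ hγ]
  exact hg 0
end

section
/- A nonzero decomposable element Ω = v₁ ∧ … ∧ v_m ∈ Λᵐg is g-invariant (i.e. [v, Ω]_S = 0 for all v ∈ g) if and only if h := span{v₁,…,v_m} is an ideal of g on which every ad_v acts tracelessly; moreover ⟨Ω⟩ = Λ^{dim h} h. This gives a one-to-one correspondence between one-dimensional spaces of decomposable g-invariant multivectors and nonzero ideals of g on which g acts tracelessly. -/
open ExteriorAlgebra

/-- Module-valued version of `AlternatingMap.eq_smul_basis_det`. -/
theorem aux_alt_eq_det_smul {R M N ι : Type*} [CommRing R] [AddCommGroup M] [Module R M]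
    [AddCommGroup N] [Module R N] [Fintype ι] [DecidableEq ι]
    (e : Module.Basis ι R M) (f : M [⋀^ι]→ₗ[R] N) (v : ι → M) :
    f v = e.det v • f e := by
  have hf : f = (LinearMap.toSpanSingleton R N (f e)).compAlternatingMap e.det := by
    refine Module.Basis.ext_alternating e fun i h => ?_
    let σ : Equiv.Perm ι := Equiv.ofBijective i (Finite.injective_iff_bijective.1 h)
    change f (e ∘ σ) = (LinearMap.toSpanSingleton R N (f e)).compAlternatingMap e.det (e ∘ σ)
    simp [AlternatingMap.map_perm, Module.Basis.det_self, LinearMap.toSpanSingleton_apply,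
      Units.smul_def]
  conv_lhs => rw [hf]
  simp [LinearMap.toSpanSingleton_apply]

section Aux

variable {L : Type*} [LieRing L] [LieAlgebra ℝ L] [FiniteDimensional ℝ L]

/-- A wedge of linearly independent vectors is nonzero. -/
theorem aux_iMulti_ne_zero {n : ℕ} {w : Fin n → L}
    (hw : LinearIndependent ℝ w) : ιMulti ℝ n w ≠ 0 := by
  classical
  set s := Submodule.span ℝ (Set.range w) with hs
  let b : Module.Basis (Fin n) ℝ s := Module.Basis.span hw
  obtain ⟨t, ht⟩ := Submodule.exists_isCompl s
  let π : L →ₗ[ℝ] s := Submodule.projectionOnto s t ht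
  let φ : Fin n → (L →ₗ[ℝ] ℝ) := fun i => (b.coord i).comp π
  have hφ : ∀ i j, φ i (w j) = if j = i then 1 else 0 := by
    intro i j
    have hm : w j ∈ s := Submodule.subset_span ⟨j, rfl⟩
    have hbj : b j = ⟨w j, hm⟩ := Module.Basis.span_apply hw j
    have hπ : π (w j) = b j := by
      rw [show w j = ((⟨w j, hm⟩ : s) : L) from rfl]
      rw [Submodule.linearProjOfIsCompl_apply_left ht ⟨w j, hm⟩, hbj]
    simp [φ, hπ, Module.Basis.coord_apply, Module.Basis.repr_self, Finsupp.single_apply]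
  let f : L [⋀^Fin n]→ₗ[ℝ] ℝ :=
    (Matrix.detRowAlternating).compLinearMap (LinearMap.pi φ)
  have hf : f w = 1 := by
    have hM : (Matrix.of fun j i => φ i (w j)) = (1 : Matrix (Fin n) (Fin n) ℝ) := by
      ext j i
      simp [Matrix.one_apply, hφ]
    have : f w = Matrix.det (Matrix.of fun j i => φ i (w j)) := rfl
    rw [this, hM, Matrix.det_one]
  intro h0
  have := congrArg
    (liftAlternating (Function.update (fun i => (0 : L [⋀^Fin i]→ₗ[ℝ] ℝ)) n f)) h0
  rw [liftAlternating_apply_ιMulti, map_zero, Function.update_self, hf] at this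
  exact one_ne_zero this

theorem aux_wedge_snoc {n : ℕ} (w : Fin n → L) (z : L) :
    ιMulti ℝ (n + 1) (Fin.snoc w z) = ιMulti ℝ n w * ι ℝ z := by
  rw [ιMulti_apply, ιMulti_apply, List.ofFn_succ']
  simp [Fin.snoc_castSucc, Fin.snoc_last]

theorem aux_wedge_eq_zero_iff {n : ℕ} {w : Fin n → L} (hw : LinearIndependent ℝ w) (z : L) :
    ιMulti ℝ n w * ι ℝ z = 0 ↔ z ∈ Submodule.span ℝ (Set.range w) := by
  constructor
  · intro h0
    by_contra hz
    exact aux_iMulti_ne_zero (linearIndependent_fin_snoc.2 ⟨hw, hz⟩)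
      (by rw [aux_wedge_snoc]; exact h0)
  · intro hz
    have hsub : Set.range w ⊆
        (LinearMap.ker ((LinearMap.mulLeft ℝ (ιMulti ℝ n w)) ∘ₗ (ι ℝ)) : Submodule ℝ L) := by
      rintro _ ⟨j, rfl⟩
      simp only [SetLike.mem_coe, LinearMap.mem_ker, LinearMap.comp_apply,
        LinearMap.mulLeft_apply]
      rw [← aux_wedge_snoc]
      exact AlternatingMap.map_eq_zero_of_eq _ _ (i := Fin.castSucc j) (j := Fin.last n)
        (by rw [Fin.snoc_castSucc, Fin.snoc_last]) (Fin.castSucc_lt_last j).ne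
    have hker := Submodule.span_le.2 hsub hz
    simpa using hker

end Aux

section DAux

variable {L : Type*} [LieRing L] [LieAlgebra ℝ L] [FiniteDimensional ℝ L]
  (D : L →ₗ[ℝ] Module.End ℝ (ExteriorAlgebra ℝ L))
  (hD1 : ∀ v x : L, D v (ι ℝ x) = ι ℝ ⁅v, x⁆)
  (hDmul : ∀ (v : L) (a b : ExteriorAlgebra ℝ L), D v (a * b) = D v a * b + a * D v b)

include hDmul in
theorem aux_D_one (v : L) : D v 1 = 0 := by
  have h := hDmul v 1 1
  rw [one_mul, mul_one, one_mul] at h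
  exact right_eq_add.mp h

include hD1 hDmul in
theorem aux_D_iMulti (v : L) (n : ℕ) (w : Fin n → L) :
    D v (ιMulti ℝ n w) = ∑ i, ιMulti ℝ n (Function.update w i ⁅v, w i⁆) := by
  classical
  induction n with
  | zero =>
      rw [ιMulti_zero_apply, aux_D_one D hDmul v]
      simp
  | succ n ih =>
      have e0 : ιMulti ℝ (n + 1) (Function.update w 0 ⁅v, w 0⁆) =
          ι ℝ ⁅v, w 0⁆ * ιMulti ℝ n (Matrix.vecTail w) := by
        have h1 : Function.update w 0 ⁅v, w 0⁆ 0 = ⁅v, w 0⁆ := Function.update_self _ _ _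
        have h2 : Matrix.vecTail (Function.update w 0 ⁅v, w 0⁆) = Matrix.vecTail w := by
          funext j
          simp [Matrix.vecTail, Function.update_of_ne (Fin.succ_ne_zero j)]
        rw [ιMulti_succ_apply, h1, h2]
      have es : ∀ i : Fin n, ιMulti ℝ (n + 1) (Function.update w i.succ ⁅v, w i.succ⁆) =
          ι ℝ (w 0) * ιMulti ℝ n (Function.update (Matrix.vecTail w) i
            ⁅v, Matrix.vecTail w i⁆) := by
        intro i
        have h1 : Function.update w i.succ ⁅v, w i.succ⁆ 0 = w 0 :=
          Function.update_of_ne (Fin.succ_ne_zero i).symm _ _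
        have h2 : Matrix.vecTail (Function.update w i.succ ⁅v, w i.succ⁆) =
            Function.update (Matrix.vecTail w) i ⁅v, Matrix.vecTail w i⁆ :=
          Function.update_comp_eq_of_injective _ (Fin.succ_injective n) _ _
        rw [ιMulti_succ_apply, h1, h2]
      rw [ιMulti_succ_apply, hDmul, hD1, ih, Fin.sum_univ_succ, e0, Finset.mul_sum]
      congr 1
      exact Finset.sum_congr rfl fun i _ => (es i).symm

end DAux

section Slot

variable {L : Type*} [LieRing L] [LieAlgebra ℝ L] [FiniteDimensional ℝ L]
  {m : ℕ} {x : Fin m → L} (hx : LinearIndependent ℝ x)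

theorem aux_slot (i : Fin m) (z : L) (hz : z ∈ Submodule.span ℝ (Set.range x)) :
    ιMulti ℝ m (Function.update x i z) =
      ((Module.Basis.span hx).repr ⟨z, hz⟩ i) • ιMulti ℝ m x := by
  classical
  set b : Module.Basis (Fin m) ℝ (Submodule.span ℝ (Set.range x)) := Module.Basis.span hx with hb
  have hzsum : z = ∑ j, b.repr ⟨z, hz⟩ j • x j := by
    have hs := b.sum_repr ⟨z, hz⟩
    have hc := congrArg (Subtype.val) hs
    simp only [AddSubmonoidClass.coe_finset_sum, SetLike.val_smul] at hc
    conv_lhs => rw [← hc]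
    exact Finset.sum_congr rfl fun j _ => by rw [hb, Module.Basis.span_apply]
  calc ιMulti ℝ m (Function.update x i z)
      = ∑ j, ιMulti ℝ m (Function.update x i (b.repr ⟨z, hz⟩ j • x j)) := by
        conv_lhs => rw [hzsum]
        exact (ιMulti ℝ m).map_update_sum Finset.univ i _ x
    _ = ∑ j, b.repr ⟨z, hz⟩ j • ιMulti ℝ m (Function.update x i (x j)) := by
        refine Finset.sum_congr rfl fun j _ => ?_
        rw [AlternatingMap.map_update_smul]
    _ = b.repr ⟨z, hz⟩ i • ιMulti ℝ m x := by
        rw [Finset.sum_eq_single i]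
        · rw [Function.update_eq_self]
        · intro j _ hji
          have h0 : ιMulti ℝ m (Function.update x i (x j)) = 0 :=
            AlternatingMap.map_eq_zero_of_eq _ _
              (show Function.update x i (x j) i = Function.update x i (x j) j by
                rw [Function.update_self, Function.update_of_ne hji])
              hji.symm
          rw [h0, smul_zero]
        · intro hi; exact absurd (Finset.mem_univ i) hi

end Slot

theorem aux_traceform {L : Type*} [LieRing L] [LieAlgebra ℝ L] [FiniteDimensional ℝ L]
    (D : L →ₗ[ℝ] Module.End ℝ (ExteriorAlgebra ℝ L))
    (hD1 : ∀ v x : L, D v (ι ℝ x) = ι ℝ ⁅v, x⁆)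
    (hDmul : ∀ (v : L) (a b : ExteriorAlgebra ℝ L), D v (a * b) = D v a * b + a * D v b)
    {m : ℕ} {x : Fin m → L} (hx : LinearIndependent ℝ x) (v : L)
    (hvx : ∀ i : Fin m, ⁅v, x i⁆ ∈ Submodule.span ℝ (Set.range x))
    (f : Submodule.span ℝ (Set.range x) →ₗ[ℝ] Submodule.span ℝ (Set.range x))
    (hf : ∀ y : Submodule.span ℝ (Set.range x), (f y : L) = ⁅v, (y : L)⁆) :
    D v (ιMulti ℝ m x) = (LinearMap.trace ℝ _ f) • ιMulti ℝ m x := by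
  classical
  set b : Module.Basis (Fin m) ℝ (Submodule.span ℝ (Set.range x)) := Module.Basis.span hx with hb
  have hfb : ∀ i, f (b i) = ⟨⁅v, x i⁆, hvx i⟩ := by
    intro i
    apply Subtype.ext
    rw [hf]
    congr 1
    rw [hb, Module.Basis.span_apply]
  have htr : LinearMap.trace ℝ _ f = ∑ i, b.repr (f (b i)) i := by
    rw [LinearMap.trace_eq_matrix_trace ℝ b f, Matrix.trace]
    refine Finset.sum_congr rfl fun i _ => ?_
    rw [Matrix.diag_apply, LinearMap.toMatrix_apply]
  rw [aux_D_iMulti D hD1 hDmul v m x, htr, Finset.sum_smul]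
  refine Finset.sum_congr rfl fun i _ => ?_
  rw [aux_slot hx i ⁅v, x i⁆ (hvx i), hfb i, ← hb]

/-- A nonzero decomposable element `Ω = v₁ ∧ … ∧ v_m ∈ Λᵐg` (with `v₁, …, v_m` linearly
independent) is `g`-invariant if and only if `h := span{v₁,…,v_m}` is an ideal of `g` on
which every `ad_v` acts tracelessly; moreover `⟨Ω⟩ = Λ^{dim h} h`.  (This is the content of
the one-to-one correspondence between one-dimensional spaces of decomposable `g`-invariant
multivectors and nonzero ideals of `g` on which `g` acts tracelessly.)  Here `D` is the
Schouten action of `g` on `Λg`. -/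
theorem decomposable_invariant_iff_traceless_ideal
    (L : Type*) [LieRing L] [LieAlgebra ℝ L] [FiniteDimensional ℝ L]
    (D : L →ₗ[ℝ] Module.End ℝ (ExteriorAlgebra ℝ L))
    (hD1 : ∀ v x : L, D v (ι ℝ x) = ι ℝ ⁅v, x⁆)
    (hDmul : ∀ (v : L) (a b : ExteriorAlgebra ℝ L), D v (a * b) = D v a * b + a * D v b)
    (m : ℕ) (x : Fin m → L) (hx : LinearIndependent ℝ x)
    (h : Submodule ℝ L) (hh : h = Submodule.span ℝ (Set.range x)) :
    ((∀ v : L, D v (ιMulti ℝ m x) = 0) ↔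
      ((∀ v : L, ∀ y ∈ h, ⁅v, y⁆ ∈ h) ∧
        (∀ (v : L) (f : h →ₗ[ℝ] h),
          (∀ y : h, (f y : L) = ⁅v, (y : L)⁆) → LinearMap.trace ℝ h f = 0))) ∧
    Submodule.span ℝ {ιMulti ℝ m x} =
      Submodule.span ℝ {u | ∃ y : Fin m → L, (∀ i, y i ∈ h) ∧ u = ιMulti ℝ m y} := by
  subst hh
  have hmem : ∀ i : Fin m, x i ∈ Submodule.span ℝ (Set.range x) :=
    fun i => Submodule.subset_span ⟨i, rfl⟩
  constructor
  · constructor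
    · intro H
      have hideal : ∀ v : L, ∀ y ∈ Submodule.span ℝ (Set.range x),
          ⁅v, y⁆ ∈ Submodule.span ℝ (Set.range x) := by
        intro v y hy
        have h1 : ιMulti ℝ m x * ι ℝ y = 0 := (aux_wedge_eq_zero_iff hx y).2 hy
        have h2 : D v (ιMulti ℝ m x * ι ℝ y) = 0 := by rw [h1]; exact map_zero _
        rw [hDmul, H v, zero_mul, zero_add, hD1] at h2
        exact (aux_wedge_eq_zero_iff hx _).1 h2
      refine ⟨hideal, fun v f hf => ?_⟩
      have hform := aux_traceform D hD1 hDmul hx v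
        (fun i => hideal v (x i) (hmem i)) f hf
      rw [H v] at hform
      rcases smul_eq_zero.mp hform.symm with h0 | h0
      · exact h0
      · exact absurd h0 (aux_iMulti_ne_zero hx)
    · rintro ⟨hideal, htr⟩ v
      have hres : ∀ y ∈ Submodule.span ℝ (Set.range x),
          (LieAlgebra.ad ℝ L v) y ∈ Submodule.span ℝ (Set.range x) := by
        intro y hy
        rw [LieAlgebra.ad_apply]
        exact hideal v y hy
      set f := (LieAlgebra.ad ℝ L v).restrict hres with hfdef
      have hf : ∀ y : Submodule.span ℝ (Set.range x), (f y : L) = ⁅v, (y : L)⁆ := by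
        intro y
        rw [hfdef, LinearMap.restrict_apply]
        simp [LieAlgebra.ad_apply]
      rw [aux_traceform D hD1 hDmul hx v (fun i => hideal v (x i) (hmem i)) f hf,
        htr v f hf, zero_smul]
  · classical
    apply le_antisymm
    · refine Submodule.span_le.2 ?_
      intro u hu
      rw [Set.mem_singleton_iff] at hu
      subst hu
      exact Submodule.subset_span ⟨x, hmem, rfl⟩
    · refine Submodule.span_le.2 ?_
      rintro u ⟨y, hy, rfl⟩
      set b : Module.Basis (Fin m) ℝ (Submodule.span ℝ (Set.range x)) := Module.Basis.span hx with hb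
      set F := (ιMulti ℝ m (M := L)).compLinearMap
        (Submodule.span ℝ (Set.range x)).subtype with hF
      set Y : Fin m → Submodule.span ℝ (Set.range x) := fun i => ⟨y i, hy i⟩ with hY
      have h1 : ιMulti ℝ m y = F Y := rfl
      have h3 : F b = ιMulti ℝ m x := by
        show ιMulti ℝ m (fun i => ((b i : L))) = ιMulti ℝ m x
        congr 1
        funext i
        rw [hb, Module.Basis.span_apply]
      rw [SetLike.mem_coe, h1, aux_alt_eq_det_smul b F Y, h3]
      exact Submodule.smul_mem _ _ (Submodule.mem_span_singleton_self _)
end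

section
/- Let g be a nilpotent Lie algebra with lower central series g = g₀ ⊇ g₁ ⊇ … ⊇ g_{p-1} ⊇ g_p = 0, g_{p-1} ≠ 0. If the center z(g) is one-dimensional, then z(g) ∧ g_{p-2} ⊆ (Λ²g)^g, i.e. every wedge of a central element with an element of g_{p-2} is g-invariant. -/
open ExteriorAlgebra

/-- Let `g` be a nilpotent Lie algebra with lower central series
`g = g₀ ⊇ g₁ ⊇ … ⊇ g_{p-1} ≠ 0`, `g_p = 0` (here reindexed so that `g_{p+2} = 0` and
`g_{p+1} ≠ 0`).  If the center `z(g)` is one-dimensional, then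
`z(g) ∧ g_{p-2} ⊆ (Λ²g)^g`: every wedge of a central element with an element of `g_{p-2}` is
`g`-invariant.  Here `D` is the Schouten action of `g` on `Λg`. -/
theorem center_wedge_lower_central_invariant
    (L : Type*) [LieRing L] [LieAlgebra ℝ L]
    (D : L →ₗ[ℝ] Module.End ℝ (ExteriorAlgebra ℝ L))
    (hD1 : ∀ v x : L, D v (ι ℝ x) = ι ℝ ⁅v, x⁆)
    (hDmul : ∀ (v : L) (a b : ExteriorAlgebra ℝ L), D v (a * b) = D v a * b + a * D v b)
    (p : ℕ)
    (hp : LieModule.lowerCentralSeries ℝ L L (p + 2) = ⊥)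
    (hne : LieModule.lowerCentralSeries ℝ L L (p + 1) ≠ ⊥)
    (hz : Module.finrank ℝ (LieAlgebra.center ℝ L) = 1)
    (a c : L) (ha : a ∈ LieAlgebra.center ℝ L) (hc : c ∈ LieModule.lowerCentralSeries ℝ L L p) :
    ∀ v : L, D v (ι ℝ a * ι ℝ c) = 0 := by
  intro v
  have hva : ⁅v, a⁆ = 0 := ha v
  rw [hDmul, hD1, hD1, hva, map_zero, zero_mul, zero_add]
  -- ⁅v, c⁆ lies in the (p+1)-st term of the lower central series
  have hvc1 : ⁅v, c⁆ ∈ LieModule.lowerCentralSeries ℝ L L (p + 1) := by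
    rw [LieModule.lowerCentralSeries_succ]
    exact LieSubmodule.lie_mem_lie (LieSubmodule.mem_top v) hc
  -- hence ⁅v, c⁆ is central
  have hvcz : ⁅v, c⁆ ∈ LieAlgebra.center ℝ L := by
    intro u
    have : ⁅u, ⁅v, c⁆⁆ ∈ LieModule.lowerCentralSeries ℝ L L (p + 2) := by
      rw [LieModule.lowerCentralSeries_succ]
      exact LieSubmodule.lie_mem_lie (LieSubmodule.mem_top u) hvc1
    rw [hp] at this
    simpa using this
  by_cases h0 : a = 0
  · simp [h0]
  · -- the center is one-dimensional and spanned by a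
    have hA0 : (⟨a, ha⟩ : LieAlgebra.center ℝ L) ≠ 0 := by
      simp [Subtype.ext_iff, h0]
    have hspan := (finrank_eq_one_iff_of_nonzero (⟨a, ha⟩ : LieAlgebra.center ℝ L) hA0).mp hz
    have hmem : (⟨⁅v, c⁆, hvcz⟩ : LieAlgebra.center ℝ L) ∈
        Submodule.span ℝ {(⟨a, ha⟩ : LieAlgebra.center ℝ L)} := hspan ▸ Submodule.mem_top
    obtain ⟨t, ht⟩ := Submodule.mem_span_singleton.mp hmem
    have ht' : t • a = ⁅v, c⁆ := congrArg Subtype.val ht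
    rw [← ht', map_smul, mul_smul_comm, ι_sq_zero, smul_zero]
end

section
/- Let g be a Lie algebra with nonzero Killing form κ whose first derived ideal g₁ = [g,g] is a two-dimensional abelian subalgebra contained in the kernel of κ. Then for every v ∉ g₁ and every Lie algebra automorphism T of g, either Tv ∈ v + g₁ or Tv ∈ -v + g₁, and T maps eigenvectors of ad_v|_{g₁} to eigenvectors of ad_v|_{g₁}. -/
open Module

/-- Let `g` be a (three-dimensional) Lie algebra with nonzero Killing form `κ` whose first
derived ideal `g₁ = [g,g]` is a two-dimensional abelian subalgebra contained in the kernel of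
`κ`.  Then for every `v ∉ g₁` and every Lie algebra automorphism `T` of `g`, either
`Tv ∈ v + g₁` or `Tv ∈ -v + g₁`, and `T` maps eigenvectors of `ad_v|_{g₁}` to eigenvectors of
`ad_v|_{g₁}`. -/
theorem automorphism_preserves_eigenvectors_of_ad
    (L : Type*) [LieRing L] [LieAlgebra ℝ L] [FiniteDimensional ℝ L]
    (hL : Module.finrank ℝ L = 3)
    (hκ : killingForm ℝ L ≠ 0)
    (hdim : Module.finrank ℝ (LieAlgebra.derivedSeries ℝ L 1) = 2)
    (hab : ∀ x ∈ LieAlgebra.derivedSeries ℝ L 1, ∀ y ∈ LieAlgebra.derivedSeries ℝ L 1,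
      ⁅x, y⁆ = (0 : L))
    (hker : ∀ x ∈ LieAlgebra.derivedSeries ℝ L 1, ∀ y : L, killingForm ℝ L x y = 0)
    (T : L ≃ₗ⁅ℝ⁆ L) (v : L) (hv : v ∉ LieAlgebra.derivedSeries ℝ L 1) :
    (T v - v ∈ LieAlgebra.derivedSeries ℝ L 1 ∨ T v + v ∈ LieAlgebra.derivedSeries ℝ L 1) ∧
    (∀ (w : L) (c : ℝ), w ∈ LieAlgebra.derivedSeries ℝ L 1 → w ≠ 0 → ⁅v, w⁆ = c • w →
      T w ∈ LieAlgebra.derivedSeries ℝ L 1 ∧ ∃ c' : ℝ, ⁅v, T w⁆ = c' • T w) := by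
  classical
  set I := LieAlgebra.derivedSeries ℝ L 1 with hI
  -- T preserves I
  have hT : ∀ x ∈ I, T x ∈ I := by
    intro x hx
    have h := LieIdeal.derivedSeries_map_eq (f := (T : L →ₗ⁅ℝ⁆ L)) 1 T.surjective
    rw [hI, ← h]
    exact LieIdeal.mem_map hx
  set p : Submodule ℝ L := (I : Submodule ℝ L) with hp
  have hvp : v ∉ p := hv
  have hp2 : finrank ℝ p = 2 := hdim
  -- p ⊔ span v = ⊤
  have hsup : p ⊔ (ℝ ∙ v) = ⊤ := by
    apply Submodule.eq_top_of_finrank_eq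
    have hlt : p < p ⊔ ℝ ∙ v := by
      refine lt_of_le_of_ne le_sup_left (fun h => hvp ?_)
      rw [h]
      exact Submodule.mem_sup_right (Submodule.mem_span_singleton_self v)
    have h1 : 2 < finrank ℝ ↥(p ⊔ ℝ ∙ v) := hp2 ▸ Submodule.finrank_lt_finrank_of_lt hlt
    have h2 : finrank ℝ ↥(p ⊔ ℝ ∙ v) ≤ 3 := hL ▸ Submodule.finrank_le _
    omega
  -- decompose any element
  have hdec : ∀ x : L, ∃ u ∈ I, ∃ a : ℝ, x = u + a • v := by
    intro x
    have hx : x ∈ p ⊔ ℝ ∙ v := hsup ▸ Submodule.mem_top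
    obtain ⟨u, hu, z, hz, hx⟩ := Submodule.mem_sup.mp hx
    obtain ⟨a, rfl⟩ := Submodule.mem_span_singleton.mp hz
    exact ⟨u, hu, a, hx.symm⟩
  -- κ(v, v) ≠ 0
  have hκv : killingForm ℝ L v v ≠ 0 := by
    intro h0
    apply hκ
    ext x y
    obtain ⟨u₁, hu₁, a₁, rfl⟩ := hdec x
    obtain ⟨u₂, hu₂, a₂, rfl⟩ := hdec y
    have k1 : ∀ z : L, killingForm ℝ L u₁ z = 0 := hker u₁ hu₁
    have k2 : ∀ z : L, killingForm ℝ L z u₂ = 0 := fun z => by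
      rw [LieModule.traceForm_comm]; exact hker u₂ hu₂ z
    simp [map_add, LinearMap.add_apply, map_smul, LinearMap.smul_apply, k1, k2, h0]
  -- decompose T v
  obtain ⟨u, hu, a, hTv⟩ := hdec (T v)
  have hκT : killingForm ℝ L (T v) (T v) = killingForm ℝ L v v :=
    LieAlgebra.killingForm_of_equiv_apply T v v
  have ha2 : a * a = 1 := by
    have k1 : ∀ z : L, killingForm ℝ L u z = 0 := hker u hu
    have k2 : killingForm ℝ L v u = 0 := by
      rw [LieModule.traceForm_comm]; exact hker u hu v
    rw [hTv] at hκT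
    simp only [map_add, LinearMap.add_apply, map_smul, LinearMap.smul_apply, k1, k2,
      smul_eq_mul, mul_zero, add_zero, zero_add] at hκT
    have : (a * a) * killingForm ℝ L v v = 1 * killingForm ℝ L v v := by
      rw [one_mul]; linarith [hκT]
    exact mul_right_cancel₀ hκv this
  have ha : a ≠ 0 := fun h => by rw [h, mul_zero] at ha2; exact one_ne_zero ha2.symm
  constructor
  · rcases mul_self_eq_one_iff.mp ha2 with h1 | h1
    · left
      have : T v - v = u := by rw [hTv, h1, one_smul]; abel
      rw [this]; exact hu
    · right
      have : T v + v = u := by rw [hTv, h1, neg_one_smul]; abel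
      rw [this]; exact hu
  · intro w c hw hw0 hcw
    refine ⟨hT w hw, ⟨a⁻¹ * c, ?_⟩⟩
    have key : a • ⁅v, T w⁆ = c • T w := by
      have h1 : ⁅T v, T w⁆ = c • T w := by
        rw [← LieEquiv.map_lie, hcw]
        exact map_smul T.toLieHom c w
      have h2 : ⁅u, T w⁆ = 0 := hab u hu (T w) (hT w hw)
      calc a • ⁅v, T w⁆ = ⁅u + a • v, T w⁆ := by rw [add_lie, h2, zero_add, smul_lie]
        _ = ⁅T v, T w⁆ := by rw [← hTv]
        _ = c • T w := h1
    calc ⁅v, T w⁆ = a⁻¹ • (a • ⁅v, T w⁆) := by rw [smul_smul, inv_mul_cancel₀ ha, one_smul]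
      _ = a⁻¹ • (c • T w) := by rw [key]
      _ = (a⁻¹ * c) • T w := by rw [smul_smul]
end
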